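/- Let (S, μ, η) be a monad on C equipped with a differential combinator transformation ∂, and define λ_A := ⟨S(π₁), S(π₁+π₄)∘∂_{A×A}⟩ : S(A×A) → S(A)×S(A). Then λ is compatible with the negative map of the biproduct tangent structure: ⟨π₁, −π₂⟩∘λ_A = λ_A∘S(⟨π₁, −π₂⟩) as morphisms S(A×A) → S(A)×S(A). -/
import Mathlib


open CategoryTheory CategoryTheory.Limits

universe v u

variable {C : Type u} [Category.{v} C] [Preadditive C] [HasBinaryBiproducts C]

/-- A differential combinator transformation on a monad `S`. -/
structure DiffCombTrans (S : Monad C) where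
  d : ∀ A : C, S.obj A ⟶ S.obj (A ⊞ A)
  natural : ∀ {A B : C} (f : A ⟶ B), S.map f ≫ d B = d A ≫ S.map (biprod.map f f)
  dc1 : ∀ A : C, d A ≫ S.map biprod.fst = 0
  dc2 : ∀ A : C,
    d A ≫ S.map (biprod.lift biprod.fst (biprod.lift biprod.snd biprod.snd)) =
      d A ≫ S.map (biprod.lift biprod.fst (biprod.lift biprod.snd 0)) +
      d A ≫ S.map (biprod.lift biprod.fst (biprod.lift 0 biprod.snd))
  dc3 : ∀ A : C, S.η.app A ≫ d A = biprod.lift 0 (𝟙 A) ≫ S.η.app (A ⊞ A)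
  dc4 : ∀ A : C, S.μ.app A ≫ d A =
    d (S.obj A) ≫
      S.map (biprod.fst ≫ S.map (biprod.lift (𝟙 A) 0) + biprod.snd ≫ d A) ≫
      S.μ.app (A ⊞ A)
  dc5 : ∀ A : C, d A ≫ d (A ⊞ A) ≫
      S.map (biprod.lift (biprod.fst ≫ biprod.fst) (biprod.snd ≫ biprod.snd)) = d A
  dc6 : ∀ A : C, d A ≫ d (A ⊞ A) ≫
      S.map (biprod.lift
        (biprod.lift (biprod.fst ≫ biprod.fst) (biprod.snd ≫ biprod.fst))
        (biprod.lift (biprod.fst ≫ biprod.snd) (biprod.snd ≫ biprod.snd))) =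
      d A ≫ d (A ⊞ A)

/-- `λ_A := ⟨S(π₁), S(π₁+π₄) ∘ ∂_{A×A}⟩ : S(A×A) ⟶ S(A) × S(A)`. -/
noncomputable def lamOf (S : Monad C) (p : DiffCombTrans S) (A : C) :
    S.obj (A ⊞ A) ⟶ S.obj A ⊞ S.obj A :=
  biprod.lift (S.map biprod.fst)
    (p.d (A ⊞ A) ≫ S.map (biprod.fst ≫ biprod.fst + biprod.snd ≫ biprod.snd))

/-- `λ` is compatible with the negative map of the biproduct tangent structure:
`⟨π₁, −π₂⟩ ∘ λ_A = λ_A ∘ S(⟨π₁, −π₂⟩)`. -/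
theorem lamOf_neg (S : Monad C) (p : DiffCombTrans S) (A : C) :
    lamOf S p A ≫ biprod.lift biprod.fst (-biprod.snd) =
      S.map (biprod.lift biprod.fst (-biprod.snd)) ≫ lamOf S p A := by
  have key : p.d (A ⊞ A) ≫ S.map (biprod.fst ≫ biprod.fst - biprod.snd ≫ biprod.snd)
      = -(p.d (A ⊞ A) ≫ S.map (biprod.fst ≫ biprod.fst + biprod.snd ≫ biprod.snd)) := by
    have h2 := congrArg (· ≫ S.map (biprod.fst ≫ biprod.fst
        + biprod.snd ≫ biprod.fst ≫ biprod.snd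
        - biprod.snd ≫ biprod.snd ≫ biprod.snd :
        (A ⊞ A) ⊞ ((A ⊞ A) ⊞ (A ⊞ A)) ⟶ A)) (p.dc2 (A ⊞ A))
    simp only [Preadditive.add_comp, Category.assoc, ← S.map_comp] at h2
    have e1 : (biprod.lift biprod.fst (biprod.lift biprod.snd biprod.snd) :
        (A ⊞ A) ⊞ (A ⊞ A) ⟶ (A ⊞ A) ⊞ ((A ⊞ A) ⊞ (A ⊞ A))) ≫
        (biprod.fst ≫ biprod.fst + biprod.snd ≫ biprod.fst ≫ biprod.snd
          - biprod.snd ≫ biprod.snd ≫ biprod.snd)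
        = biprod.fst ≫ biprod.fst := by
      simp
    have e2 : (biprod.lift biprod.fst (biprod.lift biprod.snd 0) :
        (A ⊞ A) ⊞ (A ⊞ A) ⟶ (A ⊞ A) ⊞ ((A ⊞ A) ⊞ (A ⊞ A))) ≫
        (biprod.fst ≫ biprod.fst + biprod.snd ≫ biprod.fst ≫ biprod.snd
          - biprod.snd ≫ biprod.snd ≫ biprod.snd)
        = biprod.fst ≫ biprod.fst + biprod.snd ≫ biprod.snd := by
      simp
    have e3 : (biprod.lift biprod.fst (biprod.lift 0 biprod.snd) :
        (A ⊞ A) ⊞ (A ⊞ A) ⟶ (A ⊞ A) ⊞ ((A ⊞ A) ⊞ (A ⊞ A))) ≫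
        (biprod.fst ≫ biprod.fst + biprod.snd ≫ biprod.fst ≫ biprod.snd
          - biprod.snd ≫ biprod.snd ≫ biprod.snd)
        = biprod.fst ≫ biprod.fst - biprod.snd ≫ biprod.snd := by
      simp
    rw [e1, e2, e3] at h2
    have hz : p.d (A ⊞ A) ≫ S.map ((biprod.fst ≫ biprod.fst :
        (A ⊞ A) ⊞ (A ⊞ A) ⟶ A)) = 0 := by
      rw [S.map_comp, ← Category.assoc, p.dc1, zero_comp]
    rw [hz] at h2
    exact (neg_eq_of_add_eq_zero_right h2.symm).symm
  apply biprod.hom_ext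
  · simp [lamOf, ← S.map_comp]
  · simp only [Category.assoc]
    have hnat := p.natural (biprod.lift biprod.fst (-biprod.snd) : A ⊞ A ⟶ A ⊞ A)
    have emap : (biprod.map (biprod.lift biprod.fst (-biprod.snd))
        (biprod.lift biprod.fst (-biprod.snd)) :
        (A ⊞ A) ⊞ (A ⊞ A) ⟶ (A ⊞ A) ⊞ (A ⊞ A)) ≫
        (biprod.fst ≫ biprod.fst + biprod.snd ≫ biprod.snd)
        = biprod.fst ≫ biprod.fst - biprod.snd ≫ biprod.snd := by
      simp [sub_eq_add_neg]
    calc lamOf S p A ≫ biprod.lift biprod.fst (-biprod.snd) ≫ biprod.snd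
        = -(p.d (A ⊞ A) ≫ S.map (biprod.fst ≫ biprod.fst + biprod.snd ≫ biprod.snd)) := by
          simp [lamOf]
      _ = p.d (A ⊞ A) ≫ S.map (biprod.fst ≫ biprod.fst - biprod.snd ≫ biprod.snd) := key.symm
      _ = S.map (biprod.lift biprod.fst (-biprod.snd)) ≫ lamOf S p A ≫ biprod.snd := by
          rw [← emap, S.map_comp, ← Category.assoc, ← hnat]
          simp [lamOf]
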